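/- Let K be a nonempty compact Hausdorff space. Then C(K) has an L-orthogonal sequence if and only if there exist two sequences (C_n) and (D_n) of closed subsets of K with C_n ∩ D_n = ∅ for every n, such that for every nonempty open subset O of K there exists m ∈ ℕ with C_n ∩ O ≠ ∅ and D_n ∩ O ≠ ∅ for every n ≥ m. -/
import Mathlib

open Filter Topology Set

/-- Let `K` be a nonempty compact Hausdorff space. Then `C(K)` has an
`L`-orthogonal sequence if and only if there exist two sequences `(C n)`, `(D n)` of closed
subsets of `K` with `C n ∩ D n = ∅` for every `n`, such that for every nonempty open subset
`O` of `K` there exists `m` with `C n ∩ O ≠ ∅` and `D n ∩ O ≠ ∅` for every `n ≥ m`. -/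
theorem stmt1 (K : Type) [TopologicalSpace K] [CompactSpace K] [T2Space K] [Nonempty K] :
    (∃ f : ℕ → C(K, ℝ), (∀ n, ‖f n‖ ≤ 1) ∧
      ∀ g : C(K, ℝ), Filter.Tendsto (fun n => ‖g + f n‖) Filter.atTop (nhds (1 + ‖g‖))) ↔
    (∃ C D : ℕ → Set K, (∀ n, IsClosed (C n)) ∧ (∀ n, IsClosed (D n)) ∧
      (∀ n, C n ∩ D n = ∅) ∧
      ∀ O : Set K, IsOpen O → O.Nonempty →
        ∃ m : ℕ, ∀ n ≥ m, (C n ∩ O).Nonempty ∧ (D n ∩ O).Nonempty) := by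
  constructor
  · rintro ⟨f, hf1, hfL⟩
    refine ⟨fun n => {x | 1/2 ≤ f n x}, fun n => {x | f n x ≤ -(1/2)}, ?_, ?_, ?_, ?_⟩
    · exact fun n => isClosed_le continuous_const (f n).continuous
    · exact fun n => isClosed_le (f n).continuous continuous_const
    · intro n
      ext x
      simp only [mem_inter_iff, mem_setOf_eq, mem_empty_iff_false, iff_false, not_and]
      intro h1 h2; linarith
    · intro O hO hOne
      by_contra hcon
      have hfreq : ∃ᶠ n in atTop, ¬(({x | 1/2 ≤ f n x} ∩ O).Nonempty ∧
          ({x | f n x ≤ -(1/2)} ∩ O).Nonempty) := by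
        rw [frequently_atTop]
        intro m
        by_contra h
        push_neg at h
        exact hcon ⟨m, fun n hn => h n hn⟩
      simp only [not_and_or] at hfreq
      rw [frequently_or_distrib] at hfreq
      obtain ⟨x₀, hx₀⟩ := hOne
      obtain ⟨u, hu0, hu1, hu01⟩ := exists_continuous_zero_one_of_isClosed
        hO.isClosed_compl isClosed_singleton
        (by simp [Set.disjoint_left]; intro a ha hb; exact ha (hb ▸ hx₀))
      have hux₀ : u x₀ = 1 := hu1 rfl
      have hunorm : ‖u‖ = 1 := by
        refine le_antisymm ((ContinuousMap.norm_le _ zero_le_one).2 fun x => ?_) ?_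
        · rw [Real.norm_eq_abs, abs_le]
          exact ⟨by linarith [(hu01 x).1], (hu01 x).2⟩
        · calc (1:ℝ) = ‖u x₀‖ := by rw [hux₀]; simp
            _ ≤ ‖u‖ := u.norm_coe_le_norm x₀
      have hfb : ∀ n x, |f n x| ≤ 1 := fun n x =>
        le_trans ((f n).norm_coe_le_norm x) (hf1 n)
      rcases hfreq with hfreq | hfreq
      · have hev : ∀ᶠ n in atTop, (7/4 : ℝ) < ‖u + f n‖ := by
          have := hfL u
          rw [hunorm] at this
          exact this.eventually (eventually_gt_nhds (by norm_num))
        obtain ⟨n, hne, hgt⟩ := (hfreq.and_eventually hev).exists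
        rw [Set.not_nonempty_iff_eq_empty] at hne
        have hle : ‖u + f n‖ ≤ 3/2 := by
          refine (ContinuousMap.norm_le _ (by norm_num)).2 fun x => ?_
          simp only [ContinuousMap.add_apply, Real.norm_eq_abs, abs_le]
          have hb := hfb n x
          rw [abs_le] at hb
          by_cases hx : x ∈ O
          · have hxC : x ∉ {x | 1/2 ≤ f n x} := fun h =>
              Set.eq_empty_iff_forall_notMem.1 hne x ⟨h, hx⟩
            simp only [mem_setOf_eq, not_le] at hxC
            exact ⟨by linarith [(hu01 x).1], by linarith [(hu01 x).2]⟩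
          · have : u x = 0 := hu0 hx
            rw [this, zero_add]
            exact ⟨by linarith, by linarith⟩
        linarith
      · have hev : ∀ᶠ n in atTop, (7/4 : ℝ) < ‖-u + f n‖ := by
          have := hfL (-u)
          rw [norm_neg, hunorm] at this
          exact this.eventually (eventually_gt_nhds (by norm_num))
        obtain ⟨n, hne, hgt⟩ := (hfreq.and_eventually hev).exists
        rw [Set.not_nonempty_iff_eq_empty] at hne
        have hle : ‖-u + f n‖ ≤ 3/2 := by
          refine (ContinuousMap.norm_le _ (by norm_num)).2 fun x => ?_
          simp only [ContinuousMap.add_apply, ContinuousMap.neg_apply, Real.norm_eq_abs, abs_le]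
          have hb := hfb n x
          rw [abs_le] at hb
          by_cases hx : x ∈ O
          · have hxD : x ∉ {x | f n x ≤ -(1/2)} := fun h =>
              Set.eq_empty_iff_forall_notMem.1 hne x ⟨h, hx⟩
            simp only [mem_setOf_eq, not_le] at hxD
            exact ⟨by linarith [(hu01 x).2], by linarith [(hu01 x).1]⟩
          · have : u x = 0 := hu0 hx
            rw [this, neg_zero, zero_add]
            exact ⟨by linarith, by linarith⟩
        linarith
  · rintro ⟨C, D, hC, hD, hCD, hOD⟩
    have hdisj : ∀ n, Disjoint (D n) (C n) := fun n =>
      Set.disjoint_iff_inter_eq_empty.2 (by rw [Set.inter_comm]; exact hCD n)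
    have hu : ∀ n, ∃ u : C(K, ℝ), Set.EqOn u 0 (D n) ∧ Set.EqOn u 1 (C n) ∧
        ∀ x, u x ∈ Set.Icc (0:ℝ) 1 := fun n =>
      exists_continuous_zero_one_of_isClosed (hD n) (hC n) (hdisj n)
    choose u hu0 hu1 hu01 using hu
    refine ⟨fun n => (2:ℝ) • u n - 1, ?_, ?_⟩
    · intro n
      refine (ContinuousMap.norm_le _ zero_le_one).2 fun x => ?_
      have h01 := hu01 n x
      simp only [ContinuousMap.sub_apply, ContinuousMap.smul_apply, ContinuousMap.one_apply,
        smul_eq_mul, Real.norm_eq_abs, abs_le]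
      exact ⟨by linarith [h01.1], by linarith [h01.2]⟩
    · intro g
      have hfn1 : ∀ n, ‖(2:ℝ) • u n - 1‖ ≤ 1 := by
        intro n
        refine (ContinuousMap.norm_le _ zero_le_one).2 fun x => ?_
        have h01 := hu01 n x
        simp only [ContinuousMap.sub_apply, ContinuousMap.smul_apply, ContinuousMap.one_apply,
          smul_eq_mul, Real.norm_eq_abs, abs_le]
        exact ⟨by linarith [h01.1], by linarith [h01.2]⟩
      rw [Metric.tendsto_atTop]
      intro ε hε
      -- find a point attaining the norm of g
      obtain ⟨x₀, -, hx₀⟩ := isCompact_univ.exists_isMaxOn Set.univ_nonempty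
        (g.continuous.abs.continuousOn (s := Set.univ))
      have hgx₀ : ‖g‖ = |g x₀| := by
        refine le_antisymm ((ContinuousMap.norm_le _ (abs_nonneg _)).2 fun x => ?_) ?_
        · rw [Real.norm_eq_abs]; exact hx₀ (Set.mem_univ x)
        · rw [← Real.norm_eq_abs]; exact g.norm_coe_le_norm x₀
      have hub : ∀ n, ‖g + ((2:ℝ) • u n - 1)‖ ≤ ‖g‖ + 1 := fun n =>
        le_trans (norm_add_le _ _) (by linarith [hfn1 n])
      by_cases hsign : 0 ≤ g x₀
      · have hgx : g x₀ = ‖g‖ := by rw [hgx₀, abs_of_nonneg hsign]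
        set O : Set K := g ⁻¹' Set.Ioi (‖g‖ - ε) with hOdef
        have hOopen : IsOpen O := isOpen_Ioi.preimage g.continuous
        have hOne : O.Nonempty := ⟨x₀, by simp [hOdef, hgx, hε]⟩
        obtain ⟨m, hm⟩ := hOD O hOopen hOne
        refine ⟨m, fun n hn => ?_⟩
        obtain ⟨y, hyC, hyO⟩ := (hm n hn).1
        have huy : u n y = 1 := hu1 n hyC
        have hval : (g + ((2:ℝ) • u n - 1)) y = g y + 1 := by
          simp [huy]; norm_num
        have hge : g y + 1 ≤ ‖g + ((2:ℝ) • u n - 1)‖ := by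
          calc g y + 1 ≤ |g y + 1| := le_abs_self _
            _ = ‖(g + ((2:ℝ) • u n - 1)) y‖ := by rw [hval, Real.norm_eq_abs]
            _ ≤ _ := ContinuousMap.norm_coe_le_norm _ y
        have hy : ‖g‖ - ε < g y := hyO
        rw [Real.dist_eq, abs_lt]
        constructor <;> [skip; skip] <;> linarith [hub n]
      · push_neg at hsign
        have hgx : g x₀ = -‖g‖ := by rw [hgx₀, abs_of_neg hsign]; ring
        set O : Set K := g ⁻¹' Set.Iio (-‖g‖ + ε) with hOdef
        have hOopen : IsOpen O := isOpen_Iio.preimage g.continuous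
        have hOne : O.Nonempty := ⟨x₀, by simp [hOdef, hgx, hε]⟩
        obtain ⟨m, hm⟩ := hOD O hOopen hOne
        refine ⟨m, fun n hn => ?_⟩
        obtain ⟨y, hyD, hyO⟩ := (hm n hn).2
        have huy : u n y = 0 := hu0 n hyD
        have hval : (g + ((2:ℝ) • u n - 1)) y = g y - 1 := by
          simp [huy]; ring
        have hge : 1 - g y ≤ ‖g + ((2:ℝ) • u n - 1)‖ := by
          calc 1 - g y = -(g y - 1) := by ring
            _ ≤ |g y - 1| := neg_le_abs _
            _ = ‖(g + ((2:ℝ) • u n - 1)) y‖ := by rw [hval, Real.norm_eq_abs]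
            _ ≤ _ := ContinuousMap.norm_coe_le_norm _ y
        have hy : g y < -‖g‖ + ε := hyO
        rw [Real.dist_eq, abs_lt]
        constructor <;> [skip; skip] <;> linarith [hub n]
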